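/- Let T : V ⇉ V be monotone and let ṽ_i, v_i ∈ V for i = 1,…,k satisfy v_i ∈ T(ṽ_i). With ṽ^a, v^a, ε^a as the averages ṽ^a = (1/k)∑ṽ_i, v^a = (1/k)∑v_i, ε^a = (1/k)∑⟨v_i, ṽ_i − ṽ^a⟩, one has v^a ∈ T^{[ε^a]}(ṽ^a), i.e., ⟨v^a − ũ, ṽ^a − u⟩ ≥ −ε^a for all (u, ũ) with ũ ∈ T(u). -/

import Mathlib

open RealInnerProductSpace

theorem stmt_6 {V : Type*} [NormedAddCommGroup V] [InnerProductSpace ℝ V]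
    [FiniteDimensional ℝ V] (T : V → Set V)
    (hmono : ∀ u v u2 v2 : V, u2 ∈ T u → v2 ∈ T v → 0 ≤ ⟪u - v, u2 - v2⟫)
    (k : ℕ) (hk : 0 < k) (v2 v : ℕ → V)
    (hin : ∀ i ∈ Finset.range k, v i ∈ T (v2 i))
    (wa va : V) (εa : ℝ)
    (hwa : wa = (1 / (k : ℝ)) • ∑ j ∈ Finset.range k, v2 j)
    (hva : va = (1 / (k : ℝ)) • ∑ j ∈ Finset.range k, v j)
    (hεa : εa = (1 / (k : ℝ)) * ∑ i ∈ Finset.range k, ⟪v i, v2 i - wa⟫) :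
    ∀ u u2 : V, u2 ∈ T u → -εa ≤ ⟪va - u2, wa - u⟫ := by
  intro u u2 hu
  have hk' : (k : ℝ) ≠ 0 := Nat.cast_ne_zero.mpr hk.ne'
  have hsum2 : ∑ j ∈ Finset.range k, v2 j = (k : ℝ) • wa := by
    rw [hwa, smul_smul]; field_simp; rw [one_smul]
  have hsum : ∑ j ∈ Finset.range k, v j = (k : ℝ) • va := by
    rw [hva, smul_smul]; field_simp; rw [one_smul]
  have hS : 0 ≤ ∑ i ∈ Finset.range k, ⟪v2 i - u, v i - u2⟫ :=
    Finset.sum_nonneg fun i hi => hmono _ _ _ _ (hin i hi) hu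
  have key : ⟪va - u2, wa - u⟫ + εa
      = (1 / (k : ℝ)) * ∑ i ∈ Finset.range k, ⟪v2 i - u, v i - u2⟫ := by
    have e1 : ∀ i, (⟪v2 i - u, v i - u2⟫ : ℝ)
        = ⟪v i, v2 i⟫ - ⟪v2 i, u2⟫ - ⟪u, v i⟫ + ⟪u, u2⟫ := by
      intro i
      simp [inner_sub_left, inner_sub_right, real_inner_comm (v2 i) (v i)]
      ring
    have e2 : ∀ i, (⟪v i, v2 i - wa⟫ : ℝ) = ⟪v i, v2 i⟫ - ⟪v i, wa⟫ := by
      intro i; rw [inner_sub_right]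
    simp only [e1, e2, Finset.sum_add_distrib, Finset.sum_sub_distrib,
      Finset.sum_const, Finset.card_range, nsmul_eq_mul]
    rw [hεa]
    simp only [Finset.sum_sub_distrib, ← sum_inner, ← inner_sum, hsum, hsum2,
      real_inner_smul_left, real_inner_smul_right]
    rw [inner_sub_left, inner_sub_right, inner_sub_right]
    have hc : (⟪va, wa⟫ : ℝ) = ⟪wa, va⟫ := real_inner_comm _ _
    have hc2 : (⟪u, va⟫ : ℝ) = ⟪va, u⟫ := real_inner_comm _ _
    have hc3 : (⟪wa, u2⟫ : ℝ) = ⟪u2, wa⟫ := real_inner_comm _ _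
    have hc4 : (⟪u, u2⟫ : ℝ) = ⟪u2, u⟫ := real_inner_comm _ _
    have hsumw : ∑ i ∈ Finset.range k, (⟪v i, wa⟫ : ℝ) = (k : ℝ) * ⟪va, wa⟫ := by
      rw [← sum_inner, hsum, real_inner_smul_left]
    have he2s : ∑ i ∈ Finset.range k, (⟪v i, v2 i - wa⟫ : ℝ)
        = ∑ i ∈ Finset.range k, (⟪v i, v2 i⟫ : ℝ) - (k : ℝ) * ⟪va, wa⟫ := by
      simp only [e2, Finset.sum_sub_distrib, hsumw]
    field_simp
    ring_nf
    nlinarith [hc, hc2, hc3, hc4, he2s]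
  have : 0 ≤ (1 / (k : ℝ)) * ∑ i ∈ Finset.range k, ⟪v2 i - u, v i - u2⟫ :=
    mul_nonneg (by positivity) hS
  linarith [key]
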